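/- Let Q be a positive definite quadratic form with Q(b) = 1 and Q(a) = 1, a + b ≠ 0. Then φ_{a+b,Q}(-b) = a/Q(a) = a, where φ_{c,Q}(x) = (c·Q(x) + x)/(Q(x)·Q(c) + B(x,c) + 1). -/
import Mathlib


/-- The basic map `φ_{c,Q}(x) = (c·Q(x) + x) / (Q(x)·Q(c) + B(x,c) + 1)`, where
`B(x,y) = Q(x+y) - Q(x) - Q(y)` is the bilinear form associated to `Q`. -/
noncomputable def phiAQ {k : ℕ} (Q : QuadraticForm ℝ (Fin k → ℝ)) (c x : Fin k → ℝ) :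
    Fin k → ℝ :=
  (Q x * Q c + (Q (x + c) - Q x - Q c) + 1)⁻¹ • (Q x • c + x)

theorem stmt10 {k : ℕ} (Q : QuadraticForm ℝ (Fin k → ℝ)) (hQ : Q.PosDef)
    (a b : Fin k → ℝ) (ha : Q a = 1) (hb : Q b = 1) (hab : a + b ≠ 0) :
    (Q (-b) * Q (a + b) + (Q (-b + (a + b)) - Q (-b) - Q (a + b)) + 1 ≠ 0) ∧
    phiAQ Q (a + b) (-b) = a := by
  have h1 : (-b : Fin k → ℝ) + (a + b) = a := by abel
  have h2 : Q (-b) = 1 := by rw [QuadraticMap.map_neg, hb]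
  have hD : Q (-b) * Q (a + b) + (Q (-b + (a + b)) - Q (-b) - Q (a + b)) + 1 = 1 := by
    rw [h1, h2, ha]; ring
  refine ⟨by rw [hD]; norm_num, ?_⟩
  unfold phiAQ
  rw [hD, h2]
  simp
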